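/- Let μ be a finite Borel measure on ℝⁿ and m > 0, Λ ≥ 1, n ≥ 3. Define, for p ∈ ℝⁿ, r_Λ(p) = min{ s ∈ [1/m, ∞) : ∫ (max(|x-p|, s))^{2-n} dμ(x) ≤ m²/Λ } (which exists since the integral is continuous and nonincreasing in s with limit 0). If p satisfies r_Λ(p) > 1/m (i.e. ∫ max(|x-p|, 1/m)^{2-n} dμ > m²/Λ), then ∫_{B(p, r_{2Λ}(p))} (max(|x-p|, r_Λ(p)))^{2-n} dμ(x) ≥ m²/(2Λ). -/

import Mathlib

open MeasureTheory Metric Filter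
open scoped ENNReal

/-- The characteristic radius `r_Λ(p)`: the least `s ∈ [1/m, ∞)` such that
`∫ max(d(x,p), s)^{2-n} dμ(x) ≤ m²/Λ`. -/
noncomputable def charRad {X : Type*} [MetricSpace X] [MeasurableSpace X]
    (μ : Measure X) (n : ℕ) (m Λ : ℝ) (p : X) : ℝ :=
  sInf {s : ℝ | 1 / m ≤ s ∧
    ∫⁻ x, (ENNReal.ofReal (max (dist x p) s)) ^ ((2 : ℝ) - n) ∂μ ≤
      ENNReal.ofReal (m ^ 2 / Λ)}

section AuxCR

lemma auxCR_iSup_ofReal {a : ℕ → ℝ} {L : ℝ} (hmono : Monotone a)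
    (ha : Tendsto a atTop (nhds L)) : (⨆ k, ENNReal.ofReal (a k)) = ENNReal.ofReal L :=
  tendsto_nhds_unique
    (tendsto_atTop_iSup fun i j h => ENNReal.ofReal_le_ofReal (hmono h))
    ((ENNReal.continuous_ofReal.tendsto L).comp ha)

lemma auxCR_iInf_ofReal {a : ℕ → ℝ} {L : ℝ} (hanti : Antitone a)
    (ha : Tendsto a atTop (nhds L)) : (⨅ k, ENNReal.ofReal (a k)) = ENNReal.ofReal L :=
  tendsto_nhds_unique
    (tendsto_atTop_iInf fun i j h => ENNReal.ofReal_le_ofReal (hanti h))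
    ((ENNReal.continuous_ofReal.tendsto L).comp ha)

end AuxCR

/-- If `r_Λ(p) > 1/m`, i.e. `∫ max(d(x,p),1/m)^{2-n} dμ > m²/Λ`, then
`∫_{B(p, r_{2Λ}(p))} max(d(x,p), r_Λ(p))^{2-n} dμ ≥ m²/(2Λ)`. -/
theorem charRad_ball_lower_mass (n : ℕ) (hn : 3 ≤ n)
    (μ : Measure (EuclideanSpace ℝ (Fin n))) [IsFiniteMeasure μ]
    (m Λ : ℝ) (hm : 0 < m) (hΛ : 1 ≤ Λ) (p : EuclideanSpace ℝ (Fin n))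
    (hp : ENNReal.ofReal (m ^ 2 / Λ) <
      ∫⁻ x, (ENNReal.ofReal (max (dist x p) (1 / m))) ^ ((2 : ℝ) - n) ∂μ) :
    ENNReal.ofReal (m ^ 2 / (2 * Λ)) ≤
      ∫⁻ x in closedBall p (charRad μ n m (2 * Λ) p),
        (ENNReal.ofReal (max (dist x p) (charRad μ n m Λ p))) ^ ((2 : ℝ) - n) ∂μ := by
  have hm' : (0 : ℝ) < 1 / m := by positivity
  have hΛ0 : (0 : ℝ) < Λ := lt_of_lt_of_le one_pos hΛ
  set c : ℝ := (2 : ℝ) - n with hc_def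
  have hc : c < 0 := by
    have h3 : (3 : ℝ) ≤ (n : ℝ) := by exact_mod_cast hn
    simp only [hc_def]; linarith
  set F : ℝ → ℝ≥0∞ :=
    fun s => ∫⁻ x, (ENNReal.ofReal (max (dist x p) s)) ^ c ∂μ with hF_def
  -- rewriting the integrand through real rpow
  have hptrw : ∀ {s : ℝ}, 0 < s → ∀ x : EuclideanSpace ℝ (Fin n),
      (ENNReal.ofReal (max (dist x p) s)) ^ c
        = ENNReal.ofReal ((max (dist x p) s) ^ c) := fun hs x =>
    ENNReal.ofReal_rpow_of_pos (lt_of_lt_of_le hs (le_max_right _ _))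
  have hFrw : ∀ {s : ℝ}, 0 < s →
      F s = ∫⁻ x, ENNReal.ofReal ((max (dist x p) s) ^ c) ∂μ := by
    intro s hs
    exact lintegral_congr fun x => hptrw hs x
  have hmeas : ∀ s : ℝ, 0 < s →
      Measurable fun x : EuclideanSpace ℝ (Fin n) =>
        ENNReal.ofReal ((max (dist x p) s) ^ c) := by
    intro s hs
    apply Measurable.ennreal_ofReal
    apply Continuous.measurable
    refine Continuous.rpow_const ((continuous_id.dist continuous_const).max continuous_const) ?_
    intro x
    exact Or.inl (ne_of_gt (lt_of_lt_of_le hs (le_max_right _ _)))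
  -- antitonicity of F
  have hFanti : ∀ {s t : ℝ}, 0 < s → s ≤ t → F t ≤ F s := by
    intro s t hs hst
    rw [hFrw hs, hFrw (hs.trans_le hst)]
    refine lintegral_mono fun x => ENNReal.ofReal_le_ofReal ?_
    exact Real.rpow_le_rpow_of_nonpos (lt_of_lt_of_le hs (le_max_right _ _))
      (max_le_max le_rfl hst) hc.le
  -- upper bound and finiteness of F
  have hFbd : ∀ {s : ℝ}, 0 < s → F s ≤ ENNReal.ofReal (s ^ c) * μ Set.univ := by
    intro s hs
    rw [hFrw hs]
    calc ∫⁻ x, ENNReal.ofReal ((max (dist x p) s) ^ c) ∂μ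
        ≤ ∫⁻ _, ENNReal.ofReal (s ^ c) ∂μ := by
          refine lintegral_mono fun x => ENNReal.ofReal_le_ofReal ?_
          exact Real.rpow_le_rpow_of_nonpos hs (le_max_right _ _) hc.le
      _ = ENNReal.ofReal (s ^ c) * μ Set.univ := lintegral_const _
  have hFfin : ∀ {s : ℝ}, 0 < s → F s ≠ ⊤ := by
    intro s hs
    exact ((hFbd hs).trans_lt
      (ENNReal.mul_lt_top ENNReal.ofReal_lt_top (measure_lt_top μ _))).ne
  -- the sublevel sets
  set S : ℝ → Set ℝ := fun b => {s : ℝ | 1 / m ≤ s ∧ F s ≤ ENNReal.ofReal b} with hS_def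
  have hSbdd : ∀ b, BddBelow (S b) := fun b => ⟨1 / m, fun s hs => hs.1⟩
  have hSne : ∀ b : ℝ, 0 < b → (S b).Nonempty := by
    intro b hb
    have htend : Tendsto (fun s : ℝ => s ^ c * (μ Set.univ).toReal) atTop (nhds 0) := by
      have h1 : Tendsto (fun s : ℝ => s ^ c) atTop (nhds 0) := by
        have := tendsto_rpow_neg_atTop (y := (n : ℝ) - 2) (by
          have h3 : (3 : ℝ) ≤ (n : ℝ) := by exact_mod_cast hn
          linarith)
        simpa [hc_def, neg_sub] using this
      simpa using h1.mul_const (μ Set.univ).toReal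
    have hev : ∀ᶠ s : ℝ in atTop, s ^ c * (μ Set.univ).toReal < b :=
      htend.eventually_lt_const hb
    have hev2 : ∀ᶠ s : ℝ in atTop, 1 / m ≤ s := eventually_ge_atTop _
    obtain ⟨s, hs1, hs2⟩ := (hev.and hev2).exists
    refine ⟨s, hs2, ?_⟩
    have hspos : 0 < s := lt_of_lt_of_le hm' hs2
    calc F s ≤ ENNReal.ofReal (s ^ c) * μ Set.univ := hFbd hspos
      _ = ENNReal.ofReal (s ^ c) * ENNReal.ofReal (μ Set.univ).toReal := by
          rw [ENNReal.ofReal_toReal (measure_ne_top μ _)]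
      _ = ENNReal.ofReal (s ^ c * (μ Set.univ).toReal) := by
          rw [ENNReal.ofReal_mul (Real.rpow_nonneg hspos.le _)]
      _ ≤ ENNReal.ofReal b := ENNReal.ofReal_le_ofReal hs1.le
  have hSup : ∀ b : ℝ, ∀ {s t : ℝ}, s ∈ S b → s ≤ t → t ∈ S b := by
    intro b s t hs hst
    exact ⟨hs.1.trans hst, (hFanti (lt_of_lt_of_le hm' hs.1) hst).trans hs.2⟩
  -- positivity facts about the bounds
  have hb1 : (0 : ℝ) < m ^ 2 / Λ := by positivity
  have hb2 : (0 : ℝ) < m ^ 2 / (2 * Λ) := by positivity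
  -- identify charRad with sInf of S
  set r : ℝ := charRad μ n m Λ p with hr_def
  set R : ℝ := charRad μ n m (2 * Λ) p with hR_def
  have hrS : r = sInf (S (m ^ 2 / Λ)) := rfl
  have hRS : R = sInf (S (m ^ 2 / (2 * Λ))) := rfl
  have hS21 : S (m ^ 2 / (2 * Λ)) ⊆ S (m ^ 2 / Λ) := by
    intro s hs
    refine ⟨hs.1, hs.2.trans (ENNReal.ofReal_le_ofReal ?_)⟩
    rw [div_le_div_iff₀ (by positivity) hΛ0]
    nlinarith [sq_nonneg m]
  have hrm : 1 / m ≤ r := by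
    rw [hrS]; exact le_csInf (hSne _ hb1) fun s hs => hs.1
  have hRm : 1 / m ≤ R := by
    rw [hRS]; exact le_csInf (hSne _ hb2) fun s hs => hs.1
  have hrpos : 0 < r := lt_of_lt_of_le hm' hrm
  have hRpos : 0 < R := lt_of_lt_of_le hm' hRm
  have hrR : r ≤ R := by
    rw [hrS, hRS]
    exact csInf_le_csInf (hSbdd _) (hSne _ hb2) hS21
  -- the infimum is "attained": F (sInf (S b)) ≤ ofReal b
  have hinf_mem : ∀ b : ℝ, 0 < b → F (sInf (S b)) ≤ ENNReal.ofReal b := by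
    intro b hb
    set ρ : ℝ := sInf (S b) with hρ_def
    have hρm : 1 / m ≤ ρ := le_csInf (hSne _ hb) fun s hs => hs.1
    have hρpos : 0 < ρ := lt_of_lt_of_le hm' hρm
    set t : ℕ → ℝ := fun k => ρ + 1 / (k + 1) with ht_def
    have htρ : ∀ k, ρ < t k := fun k => lt_add_of_pos_right _ (by positivity)
    have htpos : ∀ k, 0 < t k := fun k => hρpos.trans (htρ k)
    have htanti : Antitone t := by
      intro i j hij
      simp only [ht_def]
      gcongr
    have htmem : ∀ k, t k ∈ S b := by
      intro k
      obtain ⟨u, huS, hu⟩ := exists_lt_of_csInf_lt (hSne _ hb) (htρ k)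
      exact hSup b huS hu.le
    have httend : Tendsto t atTop (nhds ρ) := by
      have := tendsto_one_div_add_atTop_nhds_zero_nat (𝕜 := ℝ)
      simpa [ht_def] using tendsto_const_nhds.add this
    -- pointwise supremum
    have hF_eq : F ρ = ⨆ k, F (t k) := by
      rw [hFrw hρpos]
      have hpt : ∀ x : EuclideanSpace ℝ (Fin n),
          ENNReal.ofReal ((max (dist x p) ρ) ^ c)
            = ⨆ k, ENNReal.ofReal ((max (dist x p) (t k)) ^ c) := by
        intro x
        refine (auxCR_iSup_ofReal ?_ ?_).symm
        · intro i j hij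
          exact Real.rpow_le_rpow_of_nonpos
            (lt_of_lt_of_le (htpos j) (le_max_right _ _))
            (max_le_max le_rfl (htanti hij)) hc.le
        · have hcont : ContinuousAt (fun s : ℝ => (max (dist x p) s) ^ c) ρ := by
            refine ContinuousAt.rpow_const ?_ ?_
            · exact (continuous_const.max continuous_id).continuousAt
            · exact Or.inl (ne_of_gt (lt_of_lt_of_le hρpos (le_max_right _ _)))
          exact hcont.tendsto.comp httend
      calc ∫⁻ x, ENNReal.ofReal ((max (dist x p) ρ) ^ c) ∂μ
          = ∫⁻ x, ⨆ k, ENNReal.ofReal ((max (dist x p) (t k)) ^ c) ∂μ :=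
            lintegral_congr hpt
        _ = ⨆ k, ∫⁻ x, ENNReal.ofReal ((max (dist x p) (t k)) ^ c) ∂μ :=
            lintegral_iSup (fun k => hmeas _ (htpos k)) (by
              intro i j hij x
              exact ENNReal.ofReal_le_ofReal (Real.rpow_le_rpow_of_nonpos
                (lt_of_lt_of_le (htpos j) (le_max_right _ _))
                (max_le_max le_rfl (htanti hij)) hc.le))
        _ = ⨆ k, F (t k) := by
            refine iSup_congr fun k => ?_
            rw [hFrw (htpos k)]
    rw [hF_eq]
    exact iSup_le fun k => (htmem k).2
  -- lower bound : ofReal (m^2/Λ) ≤ F r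
  have hlow : ENNReal.ofReal (m ^ 2 / Λ) ≤ F r := by
    rcases eq_or_lt_of_le hrm with heq | hlt
    · have : F r = F (1 / m) := by rw [← heq]
      rw [this]
      exact hp.le
    · set t : ℕ → ℝ := fun k => max (1 / m) (r - 1 / (k + 1)) with ht_def
      have htm : ∀ k, 1 / m ≤ t k := fun k => le_max_left _ _
      have htpos : ∀ k, 0 < t k := fun k => lt_of_lt_of_le hm' (htm k)
      have htr : ∀ k, t k < r := by
        intro k
        exact max_lt hlt (sub_lt_self _ (by positivity))
      have htmono : Monotone t := by
        intro i j hij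
        simp only [ht_def]
        gcongr
      have httend : Tendsto t atTop (nhds r) := by
        have h1 : Tendsto (fun k : ℕ => r - 1 / (k + 1 : ℝ)) atTop (nhds r) := by
          have := tendsto_one_div_add_atTop_nhds_zero_nat (𝕜 := ℝ)
          simpa using tendsto_const_nhds.sub this
        have := tendsto_const_nhds (x := (1 / m : ℝ)) (f := atTop (α := ℕ))
        have h2 := this.max h1
        rwa [max_eq_right hrm] at h2
      have htnot : ∀ k, ENNReal.ofReal (m ^ 2 / Λ) < F (t k) := by
        intro k
        by_contra hcon
        push_neg at hcon
        have : t k ∈ S (m ^ 2 / Λ) := ⟨htm k, hcon⟩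
        have := csInf_le (hSbdd _) this
        rw [← hrS] at this
        exact absurd this (not_le_of_gt (htr k))
      have hF_eq : F r = ⨅ k, F (t k) := by
        rw [hFrw hrpos]
        have hpt : ∀ x : EuclideanSpace ℝ (Fin n),
            ENNReal.ofReal ((max (dist x p) r) ^ c)
              = ⨅ k, ENNReal.ofReal ((max (dist x p) (t k)) ^ c) := by
          intro x
          refine (auxCR_iInf_ofReal ?_ ?_).symm
          · intro i j hij
            exact Real.rpow_le_rpow_of_nonpos
              (lt_of_lt_of_le (htpos i) (le_max_right _ _))
              (max_le_max le_rfl (htmono hij)) hc.le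
          · have hcont : ContinuousAt (fun s : ℝ => (max (dist x p) s) ^ c) r := by
              refine ContinuousAt.rpow_const ?_ ?_
              · exact (continuous_const.max continuous_id).continuousAt
              · exact Or.inl (ne_of_gt (lt_of_lt_of_le hrpos (le_max_right _ _)))
            exact hcont.tendsto.comp httend
        calc ∫⁻ x, ENNReal.ofReal ((max (dist x p) r) ^ c) ∂μ
            = ∫⁻ x, ⨅ k, ENNReal.ofReal ((max (dist x p) (t k)) ^ c) ∂μ :=
              lintegral_congr hpt
          _ = ⨅ k, ∫⁻ x, ENNReal.ofReal ((max (dist x p) (t k)) ^ c) ∂μ := by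
              refine lintegral_iInf (fun k => hmeas _ (htpos k)) ?_ ?_
              · intro i j hij x
                exact ENNReal.ofReal_le_ofReal (Real.rpow_le_rpow_of_nonpos
                  (lt_of_lt_of_le (htpos i) (le_max_right _ _))
                  (max_le_max le_rfl (htmono hij)) hc.le)
              · rw [← hFrw (htpos 0)]
                exact hFfin (htpos 0)
          _ = ⨅ k, F (t k) := by
              refine iInf_congr fun k => ?_
              rw [hFrw (htpos k)]
      rw [hF_eq]
      exact le_iInf fun k => (htnot k).le
  -- F R ≤ ofReal (m^2/(2Λ))
  have hFR : F R ≤ ENNReal.ofReal (m ^ 2 / (2 * Λ)) := by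
    have h := hinf_mem _ hb2
    rwa [← hRS] at h
  -- split the integral over the closed ball and its complement
  have hsplit := lintegral_add_compl
    (fun x => (ENNReal.ofReal (max (dist x p) r)) ^ c)
    (measurableSet_closedBall (x := p) (ε := R)) (μ := μ)
  -- complement bound
  have hcompl : ∫⁻ x in (closedBall p R)ᶜ,
      (ENNReal.ofReal (max (dist x p) r)) ^ c ∂μ ≤ ENNReal.ofReal (m ^ 2 / (2 * Λ)) := by
    have hcongr : ∫⁻ x in (closedBall p R)ᶜ,
        (ENNReal.ofReal (max (dist x p) r)) ^ c ∂μ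
          = ∫⁻ x in (closedBall p R)ᶜ,
        (ENNReal.ofReal (max (dist x p) R)) ^ c ∂μ := by
      refine setLIntegral_congr_fun (measurableSet_closedBall.compl) ?_
      intro x hx
      have hd : R < dist x p := by
        simpa [mem_closedBall, not_le] using hx
      beta_reduce
      rw [max_eq_left (hrR.trans hd.le), max_eq_left hd.le]
    rw [hcongr]
    calc ∫⁻ x in (closedBall p R)ᶜ, (ENNReal.ofReal (max (dist x p) R)) ^ c ∂μ
        ≤ ∫⁻ x, (ENNReal.ofReal (max (dist x p) R)) ^ c ∂μ :=
          setLIntegral_le_lintegral _ _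
      _ = F R := rfl
      _ ≤ ENNReal.ofReal (m ^ 2 / (2 * Λ)) := hFR
  -- conclude
  have hkey : ENNReal.ofReal (m ^ 2 / Λ)
      = ENNReal.ofReal (m ^ 2 / (2 * Λ)) + ENNReal.ofReal (m ^ 2 / (2 * Λ)) := by
    rw [← ENNReal.ofReal_add hb2.le hb2.le]
    congr 1
    field_simp
    ring
  have hfinal : ENNReal.ofReal (m ^ 2 / (2 * Λ)) + ENNReal.ofReal (m ^ 2 / (2 * Λ))
      ≤ (∫⁻ x in closedBall p R, (ENNReal.ofReal (max (dist x p) r)) ^ c ∂μ)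
        + ENNReal.ofReal (m ^ 2 / (2 * Λ)) := by
    calc ENNReal.ofReal (m ^ 2 / (2 * Λ)) + ENNReal.ofReal (m ^ 2 / (2 * Λ))
        = ENNReal.ofReal (m ^ 2 / Λ) := hkey.symm
      _ ≤ F r := hlow
      _ = (∫⁻ x in closedBall p R, (ENNReal.ofReal (max (dist x p) r)) ^ c ∂μ)
          + ∫⁻ x in (closedBall p R)ᶜ, (ENNReal.ofReal (max (dist x p) r)) ^ c ∂μ :=
          hsplit.symm
      _ ≤ _ := add_le_add le_rfl hcompl
  exact (ENNReal.add_le_add_iff_right ENNReal.ofReal_ne_top).mp hfinal
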